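/- arXiv:1606.00817 — 2 statements merged into one kernel-verified Lean document; each statement's English description precedes it below -/
import Mathlib

section
/- Let A and B be d×d complex matrices with singular value decompositions A = U₁S₁V₁† and B = U₂S₂V₂†, where S₁ and S₂ are diagonal with the singular values in decreasing order and U₁, U₂, V₁, V₂ are unitary. Then choosing W = U₁U₂† achieves equality in the bound, i.e. ‖A†WB‖_* = Σ_{i=1}^{d} σ_i(A)·σ_i(B). -/
open Matrix
open scoped ComplexOrder

/-- The trace norm (nuclear norm) of a complex matrix: the trace of `√(Mᴴ M)`,
which equals the sum of the singular values of `M`. -/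
noncomputable def traceNorm {n : Type*} [Fintype n] [DecidableEq n]
    (M : Matrix n n ℂ) : ℝ :=
  (((Matrix.posSemidef_conjTranspose_mul_self M).1.eigenvectorUnitary.1 *
      diagonal (((↑) : ℝ → ℂ) ∘ (√·) ∘ (Matrix.posSemidef_conjTranspose_mul_self M).1.eigenvalues) *
      (star (Matrix.posSemidef_conjTranspose_mul_self M).1.eigenvectorUnitary :
        Matrix n n ℂ)).trace).re

/-- The singular values of a `d × d` complex matrix, listed in decreasing order:
the square roots of the eigenvalues of `Mᴴ M`, sorted descending. -/
noncomputable def singularValues {d : ℕ} (M : Matrix (Fin d) (Fin d) ℂ) : Fin d → ℝ :=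
  fun i =>
    Real.sqrt
      (((List.ofFn ((Matrix.isHermitian_conjTranspose_mul_self M).eigenvalues)).insertionSort
          (· ≥ ·)).get
        ⟨i.1, by rw [List.length_insertionSort, List.length_ofFn]; exact i.2⟩)

/-- Given singular value decompositions `A = U₁ S₁ V₁ᴴ` and `B = U₂ S₂ V₂ᴴ` (with `S₁`, `S₂`
diagonal carrying the singular values in decreasing order, and `U₁, U₂, V₁, V₂` unitary),
the choice `W = U₁ U₂ᴴ` achieves equality in the bound:
`‖Aᴴ W B‖_* = ∑ i, σ_i(A) σ_i(B)`. -/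
theorem traceNorm_conjTranspose_mul_unitary_mul_eq_of_svd {d : ℕ}
    (A B U₁ U₂ V₁ V₂ : Matrix (Fin d) (Fin d) ℂ)
    (hU₁ : U₁ ∈ Matrix.unitaryGroup (Fin d) ℂ)
    (hU₂ : U₂ ∈ Matrix.unitaryGroup (Fin d) ℂ)
    (hV₁ : V₁ ∈ Matrix.unitaryGroup (Fin d) ℂ)
    (hV₂ : V₂ ∈ Matrix.unitaryGroup (Fin d) ℂ)
    (hA : A = U₁ * Matrix.diagonal (fun i => (singularValues A i : ℂ)) * V₁ᴴ)
    (hB : B = U₂ * Matrix.diagonal (fun i => (singularValues B i : ℂ)) * V₂ᴴ) :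
    traceNorm (Aᴴ * (U₁ * U₂ᴴ) * B) = ∑ i, singularValues A i * singularValues B i := by
  have hσA : ∀ i, 0 ≤ singularValues A i := fun i => Real.sqrt_nonneg _
  have hσB : ∀ i, 0 ≤ singularValues B i := fun i => Real.sqrt_nonneg _
  set σ : Fin d → ℝ := fun i => singularValues A i * singularValues B i with hσ
  have hσnn : ∀ i, 0 ≤ σ i := fun i => mul_nonneg (hσA i) (hσB i)
  set D : Matrix (Fin d) (Fin d) ℂ := Matrix.diagonal (fun i => (σ i : ℂ)) with hD
  set M : Matrix (Fin d) (Fin d) ℂ := Aᴴ * (U₁ * U₂ᴴ) * B with hM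
  have hU₁' : U₁ᴴ * U₁ = 1 := by
    have := (Matrix.mem_unitaryGroup_iff').mp hU₁
    simpa [Matrix.star_eq_conjTranspose] using this
  have hU₂' : U₂ᴴ * U₂ = 1 := by
    have := (Matrix.mem_unitaryGroup_iff').mp hU₂
    simpa [Matrix.star_eq_conjTranspose] using this
  have hV₁' : V₁ᴴ * V₁ = 1 := by
    have := (Matrix.mem_unitaryGroup_iff').mp hV₁
    simpa [Matrix.star_eq_conjTranspose] using this
  have hV₂' : V₂ᴴ * V₂ = 1 := by
    have := (Matrix.mem_unitaryGroup_iff').mp hV₂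
    simpa [Matrix.star_eq_conjTranspose] using this
  -- M = V₁ * D * V₂ᴴ
  have hAconj : Aᴴ = V₁ * Matrix.diagonal (fun i => (singularValues A i : ℂ)) * U₁ᴴ := by
    conv_lhs => rw [hA]
    simp only [Matrix.conjTranspose_mul, Matrix.diagonal_conjTranspose,
      Matrix.conjTranspose_conjTranspose, Matrix.mul_assoc]
    congr 2
    ext i j
    by_cases h : i = j <;>
      simp [Matrix.diagonal_apply, h, Pi.star_apply, Complex.conj_ofReal]
  have hMeq : M = V₁ * D * V₂ᴴ := by
    rw [hM, hAconj]
    conv_lhs => rw [hB]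
    rw [hD]
    simp only [Matrix.mul_assoc]
    rw [← Matrix.mul_assoc U₁ᴴ U₁, hU₁', Matrix.one_mul,
      ← Matrix.mul_assoc U₂ᴴ U₂, hU₂', Matrix.one_mul,
      ← Matrix.mul_assoc (Matrix.diagonal _) (Matrix.diagonal _) V₂ᴴ,
      Matrix.diagonal_mul_diagonal]
    rw [hσ]
    norm_cast
  -- candidate square root
  have hDps : Matrix.PosSemidef D := by
    rw [hD]
    refine Matrix.posSemidef_diagonal_iff.mpr fun i => ?_
    exact_mod_cast Complex.zero_le_real.mpr (hσnn i)
  have hNps : Matrix.PosSemidef (V₂ * D * V₂ᴴ) := hDps.mul_mul_conjTranspose_same V₂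
  have hsq : (V₂ * D * V₂ᴴ) ^ 2 = Mᴴ * M := by
    have hDh : Dᴴ = D := by
      rw [hD]; simp [Matrix.diagonal_conjTranspose, Function.comp_def]
    rw [hMeq]
    simp only [Matrix.conjTranspose_mul, Matrix.conjTranspose_conjTranspose, hDh, pow_two]
    simp only [Matrix.mul_assoc]
    rw [← Matrix.mul_assoc V₂ᴴ V₂, hV₂', Matrix.one_mul,
      ← Matrix.mul_assoc V₁ᴴ V₁, hV₁', Matrix.one_mul]
  have hsqrt : ((Matrix.posSemidef_conjTranspose_mul_self M).1.eigenvectorUnitary.1 *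
      diagonal (((↑) : ℝ → ℂ) ∘ (√·) ∘ (Matrix.posSemidef_conjTranspose_mul_self M).1.eigenvalues) *
      (star (Matrix.posSemidef_conjTranspose_mul_self M).1.eigenvectorUnitary :
        Matrix (Fin d) (Fin d) ℂ)) = V₂ * D * V₂ᴴ := by
    have ha := Matrix.posSemidef_conjTranspose_mul_self M
    open scoped MatrixOrder in
    have h1 : cfc Real.sqrt (Mᴴ * M) = _ := ha.1.cfc_eq _
    open scoped MatrixOrder in
    have h2 : cfc Real.sqrt (Mᴴ * M) = V₂ * D * V₂ᴴ := by
      rw [← hsq, ← cfc_pow_id (R := ℝ) (V₂ * D * V₂ᴴ) 2 hNps.1.isSelfAdjoint,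
        ← cfc_comp' Real.sqrt (fun x => x ^ 2) (V₂ * D * V₂ᴴ) (ha := hNps.1.isSelfAdjoint)]
      have hs := spectrum_nonneg_of_nonneg (𝕜 := ℝ) hNps.nonneg
      refine (cfc_congr (a := V₂ * D * V₂ᴴ) (g := fun x : ℝ => x) fun x hx => ?_).trans
        (cfc_id' ℝ (V₂ * D * V₂ᴴ) hNps.1.isSelfAdjoint)
      simp [Real.sqrt_sq (hs hx)]
    rw [← h2, h1]; rfl
  have htr : (V₂ * D * V₂ᴴ).trace = ∑ i, (σ i : ℂ) := by
    rw [Matrix.trace_mul_cycle, hV₂', Matrix.one_mul, hD, Matrix.trace_diagonal]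
  rw [traceNorm, hsqrt, htr]
  simp [hσ]
end

section
/- Let (M₁, M₂) and (N₁, N₂) be two-outcome POVMs on ℂ^d. Then the stabilized (diamond-norm) distinguishability of the two associated POVM channels equals the unstabilized one: sup over D ≥ 1 and over density matrices ρ_SA on ℂ^d ⊗ ℂ^D of (1/2)(‖T₁(ρ_SA)‖_* + ‖T₂(ρ_SA)‖_*) equals sup over density matrices ρ_S on ℂ^d of |Tr[(M₁ − N₁)ρ_S]|, and both equal max_k |λ_k(M₁ − N₁)|. In particular, no ancilla is required for optimal discrimination of two-outcome POVM channels. -/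
open Matrix
open scoped ComplexOrder

/-- `partialTraceS X ρ = Tr_S[(X ⊗ I) ρ]`: the `D × D` matrix with entries
`(T)_{ab} = ∑ i j, X_{ji} ρ_{(i,a),(j,b)}`, the partial trace over the system factor. -/
noncomputable def partialTraceS {d D : ℕ} (X : Matrix (Fin d) (Fin d) ℂ)
    (ρ : Matrix (Fin d × Fin D) (Fin d × Fin D) ℂ) : Matrix (Fin D) (Fin D) ℂ :=
  Matrix.of fun a b => ∑ i, ∑ j, X j i * ρ (i, a) (j, b)

section helpers

open scoped MatrixOrder

variable {n : Type*} [Fintype n] [DecidableEq n]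

lemma psd_diag_nonneg {M : Matrix n n ℂ} (hM : M.PosSemidef) (k : n) : 0 ≤ M k k :=
  hM.diag_nonneg

lemma psd_trace_nonneg {M : Matrix n n ℂ} (hM : M.PosSemidef) : 0 ≤ M.trace :=
  Finset.sum_nonneg fun k _ => psd_diag_nonneg hM k

lemma trace_mul_nonneg {X G : Matrix n n ℂ} (hX : X.PosSemidef) (hG : G.PosSemidef) :
    0 ≤ (X * G).trace := by
  have h1 : X * G = X * (CFC.sqrt G * CFC.sqrt G) := by rw [CFC.sqrt_mul_sqrt_self G hG.nonneg]
  have h2 : (X * (CFC.sqrt G * CFC.sqrt G)).trace = (CFC.sqrt G * X * CFC.sqrt G).trace := by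
    rw [← mul_assoc, Matrix.trace_mul_cycle]
  have h3 : (CFC.sqrt G * X * CFC.sqrt G).PosSemidef := by
    have := hX.conjTranspose_mul_mul_same (CFC.sqrt G)
    rwa [(CFC.sqrt_nonneg G).posSemidef.1] at this
  rw [h1, h2]
  exact psd_trace_nonneg h3

lemma conj_diag_psd {T : Matrix n n ℂ} (hT : T.IsHermitian) (f : n → ℝ) (hf : ∀ k, 0 ≤ f k) :
    ((hT.eigenvectorUnitary : Matrix n n ℂ) * diagonal (fun k => ((f k : ℝ) : ℂ)) *
      star (hT.eigenvectorUnitary : Matrix n n ℂ)).PosSemidef := by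
  have hd : (Matrix.diagonal (fun k => ((f k : ℝ) : ℂ))).PosSemidef :=
    .diagonal (by rw [Pi.le_def]; intro k; simpa using Complex.zero_le_real.2 (hf k))
  simpa [Matrix.star_eq_conjTranspose] using
    hd.mul_mul_conjTranspose_same (hT.eigenvectorUnitary : Matrix n n ℂ)

lemma conj_diag_mul {T : Matrix n n ℂ} (hT : T.IsHermitian) (a b : n → ℂ) :
    ((hT.eigenvectorUnitary : Matrix n n ℂ) * diagonal a *
       star (hT.eigenvectorUnitary : Matrix n n ℂ)) *
    ((hT.eigenvectorUnitary : Matrix n n ℂ) * diagonal b *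
       star (hT.eigenvectorUnitary : Matrix n n ℂ)) =
    (hT.eigenvectorUnitary : Matrix n n ℂ) * diagonal (fun k => a k * b k) *
       star (hT.eigenvectorUnitary : Matrix n n ℂ) := by
  set U := (hT.eigenvectorUnitary : Matrix n n ℂ) with hU
  have h : star U * U = 1 := Unitary.coe_star_mul_self _
  calc U * diagonal a * star U * (U * diagonal b * star U)
      = U * diagonal a * (star U * U) * diagonal b * star U := by noncomm_ring
    _ = U * diagonal a * diagonal b * star U := by rw [h, mul_one]
    _ = U * (diagonal a * diagonal b) * star U := by noncomm_ring
    _ = U * diagonal (fun k => a k * b k) * star U := by rw [diagonal_mul_diagonal]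

lemma trace_conj_diag {T : Matrix n n ℂ} (hT : T.IsHermitian) (a : n → ℂ) :
    ((hT.eigenvectorUnitary : Matrix n n ℂ) * diagonal a *
       star (hT.eigenvectorUnitary : Matrix n n ℂ)).trace = ∑ k, a k := by
  rw [Matrix.trace_mul_cycle, Unitary.coe_star_mul_self, one_mul, trace_diagonal]

lemma psd_sq_unique {S S' : Matrix n n ℂ} (hS : S.PosSemidef) (hS' : S'.PosSemidef)
    (h : S * S = S' * S') : S = S' :=
  (CFC.sqrt_unique h hS.nonneg).symm.trans (CFC.sqrt_unique rfl hS'.nonneg)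

lemma traceNorm_eq_of_sq {T S : Matrix n n ℂ} (hS : S.PosSemidef) (hsq : S ^ 2 = Tᴴ * T) :
    traceNorm T = S.trace.re := by
  have hP := Matrix.posSemidef_conjTranspose_mul_self T
  set V := (hP.1.eigenvectorUnitary : Matrix n n ℂ) with hV
  have hS' : (V * diagonal (fun k => ((√(hP.1.eigenvalues k) : ℝ) : ℂ)) * star V).PosSemidef :=
    conj_diag_psd hP.1 _ fun k => Real.sqrt_nonneg _
  have hsq' : (V * diagonal (fun k => ((√(hP.1.eigenvalues k) : ℝ) : ℂ)) * star V) *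
      (V * diagonal (fun k => ((√(hP.1.eigenvalues k) : ℝ) : ℂ)) * star V) = Tᴴ * T := by
    rw [hV, conj_diag_mul hP.1]
    conv_rhs => rw [hP.1.spectral_theorem, Unitary.conjStarAlgAut_apply]
    have hf : (fun k => ((√(hP.1.eigenvalues k) : ℝ) : ℂ) * ((√(hP.1.eigenvalues k) : ℝ) : ℂ)) =
        RCLike.ofReal ∘ hP.1.eigenvalues := by
      funext k
      rw [← Complex.ofReal_mul, Real.mul_self_sqrt (hP.eigenvalues_nonneg k)]
      rfl
    rw [hf]
  have hkey := psd_sq_unique hS hS' (by rw [← pow_two, hsq, hsq'])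
  rw [hkey]
  rfl

/-- The trace norm of a Hermitian matrix is the sum of absolute values of eigenvalues. -/
lemma traceNorm_eq_sum_abs_eigenvalues {T : Matrix n n ℂ} (hT : T.IsHermitian) :
    traceNorm T = ∑ k, |hT.eigenvalues k| := by
  set S := (hT.eigenvectorUnitary : Matrix n n ℂ) *
      diagonal (fun k => ((|hT.eigenvalues k| : ℝ) : ℂ)) *
      star (hT.eigenvectorUnitary : Matrix n n ℂ) with hSdef
  have hS : S.PosSemidef := conj_diag_psd hT _ fun k => abs_nonneg _
  have hsq : S ^ 2 = Tᴴ * T := by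
    rw [pow_two, hSdef, conj_diag_mul hT, hT.eq]
    conv_rhs => rw [hT.spectral_theorem, Unitary.conjStarAlgAut_apply]
    rw [show (RCLike.ofReal ∘ hT.eigenvalues : n → ℂ) = fun k => ((hT.eigenvalues k : ℝ) : ℂ)
        from rfl, conj_diag_mul hT]
    have hfg : (fun k => ((|hT.eigenvalues k| : ℝ) : ℂ) * ((|hT.eigenvalues k| : ℝ) : ℂ)) =
        (fun k => ((hT.eigenvalues k : ℝ) : ℂ) * ((hT.eigenvalues k : ℝ) : ℂ)) := by
      funext k
      rw [← Complex.ofReal_mul, ← Complex.ofReal_mul, abs_mul_abs_self]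
    rw [hfg]
  rw [traceNorm_eq_of_sq hS hsq, hSdef, trace_conj_diag hT, Complex.re_sum]
  exact Finset.sum_congr rfl fun k _ => Complex.ofReal_re _

/-- If `C - T` and `C + T` are PSD then the sum of the absolute values of the
eigenvalues of the Hermitian `T` is at most the (real) trace of `C`. -/
lemma sum_abs_eigenvalues_le {T C : Matrix n n ℂ} (hT : T.IsHermitian)
    (h1 : (C - T).PosSemidef) (h2 : (C + T).PosSemidef) :
    ∑ k, |hT.eigenvalues k| ≤ C.trace.re := by
  set U := (hT.eigenvectorUnitary : Matrix n n ℂ) with hU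
  have hD : star U * T * U = diagonal (fun k => ((hT.eigenvalues k : ℝ) : ℂ)) := by
    have := hT.conjStarAlgAut_star_eigenvectorUnitary
    simp only [Unitary.conjStarAlgAut_apply, Unitary.coe_star, star_star] at this
    exact this
  have hC' : ∀ k, |hT.eigenvalues k| ≤ ((star U * C * U) k k).re := by
    intro k
    have e1 : ((star U) * (C - T) * U).PosSemidef := h1.conjTranspose_mul_mul_same U
    have e2 : ((star U) * (C + T) * U).PosSemidef := h2.conjTranspose_mul_mul_same U
    have d1 : star U * (C - T) * U = star U * C * U - diagonal (fun k => ((hT.eigenvalues k : ℝ) : ℂ)) := by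
      rw [← hD]; noncomm_ring
    have d2 : star U * (C + T) * U = star U * C * U + diagonal (fun k => ((hT.eigenvalues k : ℝ) : ℂ)) := by
      rw [← hD]; noncomm_ring
    have n1 := psd_diag_nonneg (d1 ▸ e1) k
    have n2 := psd_diag_nonneg (d2 ▸ e2) k
    rw [Matrix.sub_apply, diagonal_apply_eq] at n1
    rw [Matrix.add_apply, diagonal_apply_eq] at n2
    rw [Complex.nonneg_iff] at n1 n2
    have r1 := n1.1
    have r2 := n2.1
    simp only [Complex.sub_re, Complex.add_re, Complex.ofReal_re] at r1 r2
    rw [abs_le]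
    exact ⟨by linarith, by linarith⟩
  have htr : (star U * C * U).trace = C.trace := by
    rw [Matrix.trace_mul_cycle]
    have h : U * star U = 1 := Unitary.coe_mul_star_self _
    rw [h, one_mul]
  calc ∑ k, |hT.eigenvalues k| ≤ ∑ k, ((star U * C * U) k k).re :=
        Finset.sum_le_sum fun k _ => hC' k
    _ = ((star U * C * U).trace).re := by rw [Matrix.trace, Complex.re_sum]; rfl
    _ = C.trace.re := by rw [htr]

end helpers

section pts
variable {d D : ℕ}

lemma partialTraceS_sub (X Y : Matrix (Fin d) (Fin d) ℂ)
    (ρ : Matrix (Fin d × Fin D) (Fin d × Fin D) ℂ) :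
    partialTraceS (X - Y) ρ = partialTraceS X ρ - partialTraceS Y ρ := by
  ext a b
  simp [partialTraceS, sub_mul, Finset.sum_sub_distrib]

lemma partialTraceS_add (X Y : Matrix (Fin d) (Fin d) ℂ)
    (ρ : Matrix (Fin d × Fin D) (Fin d × Fin D) ℂ) :
    partialTraceS (X + Y) ρ = partialTraceS X ρ + partialTraceS Y ρ := by
  ext a b
  simp [partialTraceS, add_mul, Finset.sum_add_distrib]

lemma partialTraceS_isHermitian {X : Matrix (Fin d) (Fin d) ℂ}
    {ρ : Matrix (Fin d × Fin D) (Fin d × Fin D) ℂ}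
    (hX : X.IsHermitian) (hρ : ρ.IsHermitian) : (partialTraceS X ρ).IsHermitian := by
  have hXe : ∀ i j, star (X j i) = X i j := fun i j => by
    conv_rhs => rw [← hX]
    rfl
  have hρe : ∀ p q, star (ρ q p) = ρ p q := fun p q => by
    conv_rhs => rw [← hρ]
    rfl
  ext a b
  simp only [conjTranspose_apply, partialTraceS, of_apply, star_sum, star_mul']
  rw [Finset.sum_comm]
  refine Finset.sum_congr rfl fun i _ => Finset.sum_congr rfl fun j _ => ?_
  rw [hXe, hρe, mul_comm]

lemma partialTraceS_posSemidef {X : Matrix (Fin d) (Fin d) ℂ}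
    {ρ : Matrix (Fin d × Fin D) (Fin d × Fin D) ℂ}
    (hX : X.PosSemidef) (hρ : ρ.PosSemidef) : (partialTraceS X ρ).PosSemidef := by
  refine .of_dotProduct_mulVec_nonneg (partialTraceS_isHermitian hX.1 hρ.1) fun v => ?_
  set W : Matrix (Fin d × Fin D) (Fin d) ℂ :=
    Matrix.of fun p i => if p.1 = i then v p.2 else 0 with hW
  have hG : ∀ i j, (Wᴴ * ρ * W) i j = ∑ a, ∑ b, star (v a) * ρ (i, a) (j, b) * v b := by
    intro i j
    rw [hW]
    simp only [mul_apply, conjTranspose_apply, of_apply, apply_ite star, star_zero, ite_mul,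
      zero_mul, mul_ite, mul_zero, Fintype.sum_prod_type, Finset.sum_ite_irrel,
      Finset.sum_const_zero, Finset.sum_ite_eq, Finset.sum_ite_eq',
      Finset.mem_univ, if_true, Finset.sum_mul, Finset.mul_sum]
    rw [Finset.sum_comm]
  have hquad : star v ⬝ᵥ (partialTraceS X ρ) *ᵥ v = (X * (Wᴴ * ρ * W)).trace := by
    have hL : star v ⬝ᵥ (partialTraceS X ρ) *ᵥ v =
        ∑ p : Fin D × Fin D, ∑ q : Fin d × Fin d,
          X q.1 q.2 * (star (v p.1) * ρ (q.2, p.1) (q.1, p.2) * v p.2) := by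
      simp only [dotProduct, mulVec, partialTraceS, of_apply, Pi.star_apply,
        Fintype.sum_prod_type, Finset.mul_sum, Finset.sum_mul]
      refine Finset.sum_congr rfl fun a _ => Finset.sum_congr rfl fun b _ => ?_
      rw [Finset.sum_comm]
      exact Finset.sum_congr rfl fun j _ => Finset.sum_congr rfl fun i _ => by ring
    have hR : (X * (Wᴴ * ρ * W)).trace =
        ∑ q : Fin d × Fin d, ∑ p : Fin D × Fin D,
          X q.1 q.2 * (star (v p.1) * ρ (q.2, p.1) (q.1, p.2) * v p.2) := by
      simp only [Matrix.trace, diag_apply, mul_apply (M := X), Fintype.sum_prod_type, hG, Finset.mul_sum]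
    rw [hL, hR]
    exact Finset.sum_comm
  rw [hquad]
  exact trace_mul_nonneg hX (hρ.conjTranspose_mul_mul_same W)

lemma trace_partialTraceS_smul_one (r : ℝ)
    (ρ : Matrix (Fin d × Fin D) (Fin d × Fin D) ℂ) :
    (partialTraceS ((r : ℂ) • 1) ρ).trace = (r : ℂ) * ρ.trace := by
  simp only [Matrix.trace, diag_apply, partialTraceS, of_apply, Matrix.smul_apply, one_apply,
    smul_eq_mul, mul_ite, mul_one, mul_zero, ite_mul, zero_mul,
    Finset.sum_ite_eq, Finset.sum_ite_eq', Finset.mem_univ, if_true,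
    Fintype.sum_prod_type, Finset.mul_sum]
  rw [Finset.sum_comm]

end pts

section bound
variable {n : Type*} [Fintype n] [DecidableEq n]

lemma conj_diag_sub {T : Matrix n n ℂ} (hT : T.IsHermitian) (a b : n → ℂ) :
    (hT.eigenvectorUnitary : Matrix n n ℂ) * diagonal a *
       star (hT.eigenvectorUnitary : Matrix n n ℂ) -
    (hT.eigenvectorUnitary : Matrix n n ℂ) * diagonal b *
       star (hT.eigenvectorUnitary : Matrix n n ℂ) =
    (hT.eigenvectorUnitary : Matrix n n ℂ) * diagonal (fun k => a k - b k) *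
       star (hT.eigenvectorUnitary : Matrix n n ℂ) := by
  have h : diagonal (fun k => a k - b k) = diagonal a - diagonal b := (diagonal_sub a b).symm
  rw [h]
  noncomm_ring

lemma conj_diag_add {T : Matrix n n ℂ} (hT : T.IsHermitian) (a b : n → ℂ) :
    (hT.eigenvectorUnitary : Matrix n n ℂ) * diagonal a *
       star (hT.eigenvectorUnitary : Matrix n n ℂ) +
    (hT.eigenvectorUnitary : Matrix n n ℂ) * diagonal b *
       star (hT.eigenvectorUnitary : Matrix n n ℂ) =
    (hT.eigenvectorUnitary : Matrix n n ℂ) * diagonal (fun k => a k + b k) *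
       star (hT.eigenvectorUnitary : Matrix n n ℂ) := by
  have h : diagonal (fun k => a k + b k) = diagonal a + diagonal b := (diagonal_add a b).symm
  rw [h]
  noncomm_ring

lemma smul_one_conj {X : Matrix n n ℂ} (hX : X.IsHermitian) (r : ℝ) :
    (r : ℂ) • (1 : Matrix n n ℂ) =
      (hX.eigenvectorUnitary : Matrix n n ℂ) * diagonal (fun _ => (r : ℂ)) *
        star (hX.eigenvectorUnitary : Matrix n n ℂ) := by
  have hUs : (hX.eigenvectorUnitary : Matrix n n ℂ) *
      star (hX.eigenvectorUnitary : Matrix n n ℂ) = 1 := Unitary.coe_mul_star_self _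
  rw [← smul_one_eq_diagonal, mul_smul_comm, smul_mul_assoc, mul_one, hUs]

lemma smul_one_sub_psd {X : Matrix n n ℂ} (hX : X.IsHermitian) {r : ℝ}
    (hr : ∀ k, |hX.eigenvalues k| ≤ r) : ((r : ℂ) • 1 - X).PosSemidef := by
  have heq : (r : ℂ) • (1 : Matrix n n ℂ) - X =
      (hX.eigenvectorUnitary : Matrix n n ℂ) *
        diagonal (fun k => ((r - hX.eigenvalues k : ℝ) : ℂ)) *
        star (hX.eigenvectorUnitary : Matrix n n ℂ) := by
    conv_lhs => rw [hX.spectral_theorem, Unitary.conjStarAlgAut_apply]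
    rw [smul_one_conj hX r, show (RCLike.ofReal ∘ hX.eigenvalues : n → ℂ) =
        fun k => ((hX.eigenvalues k : ℝ) : ℂ) from rfl, conj_diag_sub hX]
    congr 1
    congr 1
    funext k
    push_cast
    ring
  rw [heq]
  exact conj_diag_psd hX _ fun k => by have := (abs_le.1 (hr k)).2; linarith

lemma smul_one_add_psd {X : Matrix n n ℂ} (hX : X.IsHermitian) {r : ℝ}
    (hr : ∀ k, |hX.eigenvalues k| ≤ r) : ((r : ℂ) • 1 + X).PosSemidef := by
  have heq : (r : ℂ) • (1 : Matrix n n ℂ) + X =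
      (hX.eigenvectorUnitary : Matrix n n ℂ) *
        diagonal (fun k => ((r + hX.eigenvalues k : ℝ) : ℂ)) *
        star (hX.eigenvectorUnitary : Matrix n n ℂ) := by
    conv_lhs => rw [hX.spectral_theorem, Unitary.conjStarAlgAut_apply]
    rw [smul_one_conj hX r, show (RCLike.ofReal ∘ hX.eigenvalues : n → ℂ) =
        fun k => ((hX.eigenvalues k : ℝ) : ℂ) from rfl, conj_diag_add hX]
    congr 1
    congr 1
    funext k
    push_cast
    ring
  rw [heq]
  exact conj_diag_psd hX _ fun k => by have := (abs_le.1 (hr k)).1; linarith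

end bound

lemma key_bound {d D : ℕ} {X : Matrix (Fin d) (Fin d) ℂ} (hX : X.IsHermitian) {r : ℝ}
    (h1 : ((r : ℂ) • 1 - X).PosSemidef) (h2 : ((r : ℂ) • 1 + X).PosSemidef)
    {ρ : Matrix (Fin d × Fin D) (Fin d × Fin D) ℂ} (hρ : ρ.PosSemidef) (htr : ρ.trace = 1) :
    traceNorm (partialTraceS X ρ) ≤ r := by
  have hT : (partialTraceS X ρ).IsHermitian := partialTraceS_isHermitian hX hρ.1
  rw [traceNorm_eq_sum_abs_eigenvalues hT]
  have hc1 : (partialTraceS ((r : ℂ) • 1) ρ - partialTraceS X ρ).PosSemidef := by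
    rw [← partialTraceS_sub]
    exact partialTraceS_posSemidef h1 hρ
  have hc2 : (partialTraceS ((r : ℂ) • 1) ρ + partialTraceS X ρ).PosSemidef := by
    rw [← partialTraceS_add]
    exact partialTraceS_posSemidef h2 hρ
  have := sum_abs_eigenvalues_le hT hc1 hc2
  rwa [trace_partialTraceS_smul_one, htr, mul_one, Complex.ofReal_re] at this

lemma traceNorm_one_by_one (c : ℂ) :
    traceNorm (Matrix.of fun _ _ : Fin 1 => c) = ‖c‖ := by
  set M := Matrix.of fun _ _ : Fin 1 => c with hM
  have hS : (diagonal fun _ : Fin 1 => ((‖c‖ : ℝ) : ℂ)).PosSemidef :=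
    .diagonal (by
      rw [Pi.le_def]; intro k
      simpa using Complex.zero_le_real.2 (norm_nonneg c))
  have hsq : (diagonal fun _ : Fin 1 => ((‖c‖ : ℝ) : ℂ)) ^ 2 = Mᴴ * M := by
    ext i j
    fin_cases i
    fin_cases j
    simp only [pow_two, mul_apply, conjTranspose_apply, hM, of_apply, Fin.sum_univ_one,
      diagonal_apply_eq]
    calc ((‖c‖ : ℝ) : ℂ) * ((‖c‖ : ℝ) : ℂ)
        = ((‖c‖ * ‖c‖ : ℝ) : ℂ) := by push_cast; ring
      _ = ((Complex.normSq c : ℝ) : ℂ) := by rw [← Complex.sq_norm, sq]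
      _ = star c * c := by rw [Complex.normSq_eq_conj_mul_self]; rfl
  rw [traceNorm_eq_of_sq hS hsq, trace_diagonal]
  simp

section unstab
variable {n : Type*} [Fintype n] [DecidableEq n]

lemma trace_conj_diag_mul {T : Matrix n n ℂ} (hT : T.IsHermitian) (a : n → ℂ)
    (ρ : Matrix n n ℂ) :
    (((hT.eigenvectorUnitary : Matrix n n ℂ) * diagonal a *
        star (hT.eigenvectorUnitary : Matrix n n ℂ)) * ρ).trace =
      ∑ k, a k * ((star (hT.eigenvectorUnitary : Matrix n n ℂ) * ρ *
        (hT.eigenvectorUnitary : Matrix n n ℂ)) k k) := by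
  set U := (hT.eigenvectorUnitary : Matrix n n ℂ) with hU
  have h1 : (U * diagonal a * star U) * ρ = U * (diagonal a * (star U * ρ)) := by noncomm_ring
  rw [h1, Matrix.trace_mul_comm, mul_assoc, Matrix.trace]
  simp only [diag_apply, diagonal_mul, mul_assoc]

lemma trace_mul_density_le {X : Matrix n n ℂ} (hX : X.IsHermitian) {r : ℝ}
    (hr : ∀ k, |hX.eigenvalues k| ≤ r) {ρ : Matrix n n ℂ}
    (hρ : ρ.PosSemidef) (htr : ρ.trace = 1) :
    ‖(X * ρ).trace‖ ≤ r := by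
  set U := (hX.eigenvectorUnitary : Matrix n n ℂ) with hU
  set σ := star U * ρ * U with hσdef
  have hσ : σ.PosSemidef := hρ.conjTranspose_mul_mul_same U
  have hσtr : σ.trace = 1 := by
    rw [hσdef, Matrix.trace_mul_cycle]
    have h : U * star U = 1 := Unitary.coe_mul_star_self _
    rw [h, one_mul, htr]
  have htrace : (X * ρ).trace = ∑ k, ((hX.eigenvalues k : ℝ) : ℂ) * σ k k := by
    conv_lhs => rw [hX.spectral_theorem, Unitary.conjStarAlgAut_apply]
    exact trace_conj_diag_mul hX _ ρ
  have hdiag : ∀ k, σ k k = (((σ k k).re : ℝ) : ℂ) := by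
    intro k
    have := psd_diag_nonneg hσ k
    rw [Complex.nonneg_iff] at this
    exact Complex.ext rfl this.2.symm
  have hdiag0 : ∀ k, 0 ≤ (σ k k).re := fun k => ((Complex.nonneg_iff).1 (psd_diag_nonneg hσ k)).1
  have hsum : ∑ k, (σ k k).re = 1 := by
    have : (σ.trace).re = 1 := by rw [hσtr]; rfl
    rw [Matrix.trace, Complex.re_sum] at this
    exact this
  calc ‖(X * ρ).trace‖ = ‖∑ k, ((hX.eigenvalues k : ℝ) : ℂ) * σ k k‖ := by
        rw [htrace]
    _ ≤ ∑ k, ‖((hX.eigenvalues k : ℝ) : ℂ) * σ k k‖ :=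
        norm_sum_le _ _
    _ = ∑ k, |hX.eigenvalues k| * (σ k k).re := by
        refine Finset.sum_congr rfl fun k _ => ?_
        rw [norm_mul, Complex.norm_real, Real.norm_eq_abs]
        congr 1
        conv_lhs => rw [hdiag k]
        rw [Complex.norm_real, Real.norm_eq_abs]
        exact abs_of_nonneg (hdiag0 k)
    _ ≤ ∑ k, r * (σ k k).re := by
        refine Finset.sum_le_sum fun k _ => ?_
        exact mul_le_mul_of_nonneg_right (hr k) (hdiag0 k)
    _ = r := by rw [← Finset.mul_sum, hsum, mul_one]

lemma exists_eig_state {X : Matrix n n ℂ} (hX : X.IsHermitian) (k : n) :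
    ∃ ρ : Matrix n n ℂ, ρ.PosSemidef ∧ ρ.trace = 1 ∧
      (X * ρ).trace = ((hX.eigenvalues k : ℝ) : ℂ) := by
  set U := (hX.eigenvectorUnitary : Matrix n n ℂ) with hU
  set v : n → ℂ := fun i => U i k with hv
  have hnorm : ∑ i, star (v i) * v i = 1 := by
    have hUs : star U * U = 1 := Unitary.coe_star_mul_self _
    have := congrFun (congrFun (congrArg (fun M : Matrix n n ℂ => M) hUs) k) k
    have h2 : (star U * U) k k = (1 : Matrix n n ℂ) k k := by rw [hUs]
    rw [mul_apply, one_apply_eq] at h2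
    simpa [conjTranspose_apply, hv] using h2
  have hmv : X *ᵥ v = hX.eigenvalues k • v := by
    have h := hX.mulVec_eigenvectorBasis k
    have hvb : v = ⇑(hX.eigenvectorBasis k) := by
      funext i
      rw [hv]
      exact hX.eigenvectorUnitary_apply i k
    rw [hvb]
    exact h
  refine ⟨vecMulVec v (star v), .of_dotProduct_mulVec_nonneg ?_ ?_, ?_, ?_⟩
  · ext i j
    simp only [conjTranspose_apply, vecMulVec_apply, Pi.star_apply, star_mul', star_star]
    ring
  · intro x
    have hcalc : star x ⬝ᵥ (vecMulVec v (star v)) *ᵥ x =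
        (∑ i, star (x i) * v i) * star (∑ i, star (x i) * v i) := by
      simp only [dotProduct, mulVec, vecMulVec_apply, Pi.star_apply, star_sum, star_mul',
        star_star, Finset.sum_mul, Finset.mul_sum]
      rw [Finset.sum_comm]
      refine Finset.sum_congr rfl fun i _ => Finset.sum_congr rfl fun j _ => by ring
    rw [hcalc]
    exact mul_star_self_nonneg _
  · rw [Matrix.trace]
    simp only [diag_apply, vecMulVec_apply, Pi.star_apply]
    calc ∑ i, v i * star (v i) = ∑ i, star (v i) * v i :=
          Finset.sum_congr rfl fun i _ => mul_comm _ _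
      _ = 1 := hnorm
  · rw [Matrix.trace]
    simp only [diag_apply, mul_apply, vecMulVec_apply, Pi.star_apply]
    have : ∀ j, ∑ i, X j i * (v i * star (v j)) = (hX.eigenvalues k • v) j * star (v j) := by
      intro j
      rw [← hmv]
      simp only [mulVec, dotProduct, Finset.sum_mul]
      exact Finset.sum_congr rfl fun i _ => by ring
    rw [Finset.sum_congr rfl fun j _ => this j]
    have : ∀ j, (hX.eigenvalues k • v) j * star (v j) =
        ((hX.eigenvalues k : ℝ) : ℂ) * (star (v j) * v j) := by
      intro j
      simp only [Pi.smul_apply, Complex.real_smul]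
      ring
    rw [Finset.sum_congr rfl fun j _ => this j, ← Finset.mul_sum, hnorm, mul_one]

end unstab

section embed
variable {d : ℕ}

/-- Embed a density matrix on `ℂ^d` as a density matrix on `ℂ^d ⊗ ℂ^1`. -/
noncomputable def embed1 (ρ : Matrix (Fin d) (Fin d) ℂ) :
    Matrix (Fin d × Fin 1) (Fin d × Fin 1) ℂ :=
  Matrix.of fun p q => ρ p.1 q.1

lemma embed1_posSemidef {ρ : Matrix (Fin d) (Fin d) ℂ} (hρ : ρ.PosSemidef) :
    (embed1 ρ).PosSemidef := by
  refine .of_dotProduct_mulVec_nonneg ?_ ?_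
  · ext p q
    have : star (ρ q.1 p.1) = ρ p.1 q.1 := by
      conv_rhs => rw [← hρ.1]
      rfl
    simpa [embed1, conjTranspose_apply] using this
  · intro x
    have h := hρ.dotProduct_mulVec_nonneg fun i => x (i, 0)
    calc star x ⬝ᵥ (embed1 ρ) *ᵥ x
        = star (fun i => x (i, 0)) ⬝ᵥ ρ *ᵥ (fun i => x (i, 0)) := by
          simp only [dotProduct, mulVec, embed1, of_apply, Pi.star_apply,
            Fintype.sum_prod_type, Fin.sum_univ_one]
      _ ≥ 0 := h

lemma embed1_trace (ρ : Matrix (Fin d) (Fin d) ℂ) : (embed1 ρ).trace = ρ.trace := by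
  simp [Matrix.trace, embed1, Fintype.sum_prod_type, Fin.sum_univ_one]

lemma partialTraceS_embed1 (X : Matrix (Fin d) (Fin d) ℂ) (ρ : Matrix (Fin d) (Fin d) ℂ) :
    partialTraceS X (embed1 ρ) = Matrix.of fun _ _ : Fin 1 => (X * ρ).trace := by
  ext a b
  simp only [partialTraceS, embed1, of_apply, Matrix.trace, diag_apply, mul_apply]
  rw [Finset.sum_comm]

end embed

/-- **Diamond norm of two-outcome POVM channels.** The stabilized (diamond-norm)
distinguishability of two two-outcome POVM channels — the supremum over ancilla dimensions
`D ≥ 1` and density matrices `ρ_SA` on `ℂ^d ⊗ ℂ^D` of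
`(1/2)(‖T₁(ρ_SA)‖_* + ‖T₂(ρ_SA)‖_*)` with `T_μ = Tr_S[((M_μ − N_μ) ⊗ I) ρ_SA]` — equals the
unstabilized one, `sup_{ρ_S} |Tr[(M₁ − N₁)ρ_S]|`, and both equal
`max_k |λ_k(M₁ − N₁)|`: no ancilla is required for optimal discrimination. -/
theorem diamondNorm_povmChannel_eq_unstabilized {d : ℕ}
    (M₁ M₂ N₁ N₂ : Matrix (Fin d) (Fin d) ℂ)
    (hM₁ : M₁.PosSemidef) (hM₂ : M₂.PosSemidef) (hMsum : M₁ + M₂ = 1)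
    (hN₁ : N₁.PosSemidef) (hN₂ : N₂.PosSemidef) (hNsum : N₁ + N₂ = 1) :
    (⨆ D : {D : ℕ // 1 ≤ D},
      ⨆ ρ : {ρ : Matrix (Fin d × Fin D.1) (Fin d × Fin D.1) ℂ // ρ.PosSemidef ∧ ρ.trace = 1},
        (1 / 2 : ℝ) * (traceNorm (partialTraceS (M₁ - N₁) ρ.1) +
          traceNorm (partialTraceS (M₂ - N₂) ρ.1))) =
      (⨆ ρ : {ρ : Matrix (Fin d) (Fin d) ℂ // ρ.PosSemidef ∧ ρ.trace = 1},
        ‖((M₁ - N₁) * ρ.1).trace‖) ∧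
    (⨆ ρ : {ρ : Matrix (Fin d) (Fin d) ℂ // ρ.PosSemidef ∧ ρ.trace = 1},
        ‖((M₁ - N₁) * ρ.1).trace‖) =
      ⨆ k, |(hM₁.1.sub hN₁.1).eigenvalues k| := by
  have hΔ : (M₁ - N₁).IsHermitian := hM₁.1.sub hN₁.1
  have hM2N2 : M₂ - N₂ = -(M₁ - N₁) := by
    have h1 : M₂ = 1 - M₁ := eq_sub_of_add_eq' hMsum
    have h2 : N₂ = 1 - N₁ := eq_sub_of_add_eq' hNsum
    rw [h1, h2]
    abel
  rcases Nat.eq_zero_or_pos d with hd | hd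
  · subst hd
    have hS0 : ∀ D : {D : ℕ // 1 ≤ D},
        IsEmpty {ρ : Matrix (Fin 0 × Fin D.1) (Fin 0 × Fin D.1) ℂ //
          ρ.PosSemidef ∧ ρ.trace = 1} := by
      intro D
      constructor
      rintro ⟨ρ, -, h⟩
      rw [Matrix.trace] at h
      simp at h
    haveI hU0 : IsEmpty {ρ : Matrix (Fin 0) (Fin 0) ℂ // ρ.PosSemidef ∧ ρ.trace = 1} := by
      constructor
      rintro ⟨ρ, -, h⟩
      rw [Matrix.trace] at h
      simp at h
    have e1 : (⨆ D : {D : ℕ // 1 ≤ D},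
        ⨆ ρ : {ρ : Matrix (Fin 0 × Fin D.1) (Fin 0 × Fin D.1) ℂ // ρ.PosSemidef ∧ ρ.trace = 1},
          (1 / 2 : ℝ) * (traceNorm (partialTraceS (M₁ - N₁) ρ.1) +
            traceNorm (partialTraceS (M₂ - N₂) ρ.1))) = 0 := by
      have h0 : ∀ D : {D : ℕ // 1 ≤ D},
          (⨆ ρ : {ρ : Matrix (Fin 0 × Fin D.1) (Fin 0 × Fin D.1) ℂ //
            ρ.PosSemidef ∧ ρ.trace = 1},
            (1 / 2 : ℝ) * (traceNorm (partialTraceS (M₁ - N₁) ρ.1) +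
              traceNorm (partialTraceS (M₂ - N₂) ρ.1))) = (0 : ℝ) := by
        intro D
        haveI := hS0 D
        exact Real.iSup_of_isEmpty _
      haveI : Nonempty {D : ℕ // 1 ≤ D} := ⟨⟨1, le_refl 1⟩⟩
      rw [iSup_congr h0]
      exact ciSup_const
    have e2 : (⨆ ρ : {ρ : Matrix (Fin 0) (Fin 0) ℂ // ρ.PosSemidef ∧ ρ.trace = 1},
        ‖((M₁ - N₁) * ρ.1).trace‖) = 0 := Real.iSup_of_isEmpty _
    have e3 : (⨆ k : Fin 0, |(hM₁.1.sub hN₁.1).eigenvalues k|) = 0 := Real.iSup_of_isEmpty _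
    exact ⟨by rw [e1, e2], by rw [e2, e3]⟩
  · haveI : Nonempty (Fin d) := ⟨⟨0, hd⟩⟩
    have hbdd : BddAbove (Set.range fun k => |hΔ.eigenvalues k|) :=
      Set.Finite.bddAbove (Set.finite_range _)
    set R := ⨆ k, |hΔ.eigenvalues k| with hRdef
    have hRk : ∀ k, |hΔ.eigenvalues k| ≤ R := fun k => le_ciSup hbdd k
    have hR0 : 0 ≤ R := le_trans (abs_nonneg _) (hRk (Classical.arbitrary _))
    have hpsd1 : ((R : ℂ) • 1 - (M₁ - N₁)).PosSemidef := smul_one_sub_psd hΔ hRk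
    have hpsd2 : ((R : ℂ) • 1 + (M₁ - N₁)).PosSemidef := smul_one_add_psd hΔ hRk
    have hΔn : (M₂ - N₂).IsHermitian := hM₂.1.sub hN₂.1
    have hpsd1' : ((R : ℂ) • 1 - (M₂ - N₂)).PosSemidef := by
      rw [hM2N2, sub_neg_eq_add]
      exact hpsd2
    have hpsd2' : ((R : ℂ) • 1 + (M₂ - N₂)).PosSemidef := by
      rw [hM2N2, ← sub_eq_add_neg]
      exact hpsd1
    have hval : ∀ (D : {D : ℕ // 1 ≤ D})
        (ρ : {ρ : Matrix (Fin d × Fin D.1) (Fin d × Fin D.1) ℂ // ρ.PosSemidef ∧ ρ.trace = 1}),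
        (1 / 2 : ℝ) * (traceNorm (partialTraceS (M₁ - N₁) ρ.1) +
          traceNorm (partialTraceS (M₂ - N₂) ρ.1)) ≤ R := by
      intro D ρ
      have b1 := key_bound hΔ hpsd1 hpsd2 ρ.2.1 ρ.2.2
      have b2 := key_bound hΔn hpsd1' hpsd2' ρ.2.1 ρ.2.2
      linarith
    have hinner_le : ∀ D : {D : ℕ // 1 ≤ D},
        (⨆ ρ : {ρ : Matrix (Fin d × Fin D.1) (Fin d × Fin D.1) ℂ // ρ.PosSemidef ∧ ρ.trace = 1},
          (1 / 2 : ℝ) * (traceNorm (partialTraceS (M₁ - N₁) ρ.1) +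
            traceNorm (partialTraceS (M₂ - N₂) ρ.1))) ≤ R := by
      intro D
      rcases isEmpty_or_nonempty {ρ : Matrix (Fin d × Fin D.1) (Fin d × Fin D.1) ℂ //
          ρ.PosSemidef ∧ ρ.trace = 1} with he | hne
      · rw [Real.iSup_of_isEmpty]
        exact hR0
      · exact ciSup_le (hval D)
    haveI : Nonempty {D : ℕ // 1 ≤ D} := ⟨⟨1, le_refl 1⟩⟩
    have hstab_le : (⨆ D : {D : ℕ // 1 ≤ D},
        ⨆ ρ : {ρ : Matrix (Fin d × Fin D.1) (Fin d × Fin D.1) ℂ // ρ.PosSemidef ∧ ρ.trace = 1},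
          (1 / 2 : ℝ) * (traceNorm (partialTraceS (M₁ - N₁) ρ.1) +
            traceNorm (partialTraceS (M₂ - N₂) ρ.1))) ≤ R := ciSup_le hinner_le
    have hust : ∀ ρ : {ρ : Matrix (Fin d) (Fin d) ℂ // ρ.PosSemidef ∧ ρ.trace = 1},
        ‖((M₁ - N₁) * ρ.1).trace‖ ≤ R :=
      fun ρ => trace_mul_density_le hΔ hRk ρ.2.1 ρ.2.2
    have hbU : BddAbove (Set.range fun ρ : {ρ : Matrix (Fin d) (Fin d) ℂ //
        ρ.PosSemidef ∧ ρ.trace = 1} => ‖((M₁ - N₁) * ρ.1).trace‖) := by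
      refine ⟨R, ?_⟩
      rintro x ⟨ρ, rfl⟩
      exact hust ρ
    haveI hneU : Nonempty {ρ : Matrix (Fin d) (Fin d) ℂ // ρ.PosSemidef ∧ ρ.trace = 1} := by
      obtain ⟨ρ, h1, h2, -⟩ := exists_eig_state hΔ (Classical.arbitrary (Fin d))
      exact ⟨⟨ρ, h1, h2⟩⟩
    have hU_le : (⨆ ρ : {ρ : Matrix (Fin d) (Fin d) ℂ // ρ.PosSemidef ∧ ρ.trace = 1},
        ‖((M₁ - N₁) * ρ.1).trace‖) ≤ R := ciSup_le hust
    have hU_ge : R ≤ ⨆ ρ : {ρ : Matrix (Fin d) (Fin d) ℂ // ρ.PosSemidef ∧ ρ.trace = 1},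
        ‖((M₁ - N₁) * ρ.1).trace‖ := by
      rw [hRdef]
      refine ciSup_le fun k => ?_
      obtain ⟨ρ, h1, h2, h3⟩ := exists_eig_state hΔ k
      have habs : |hΔ.eigenvalues k| = ‖((M₁ - N₁) * ρ).trace‖ := by
        rw [h3, Complex.norm_real, Real.norm_eq_abs]
      rw [habs]
      exact le_ciSup hbU ⟨ρ, h1, h2⟩
    have hUR : (⨆ ρ : {ρ : Matrix (Fin d) (Fin d) ℂ // ρ.PosSemidef ∧ ρ.trace = 1},
        ‖((M₁ - N₁) * ρ.1).trace‖) = R := le_antisymm hU_le hU_ge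
    have hstab_ge : R ≤ ⨆ D : {D : ℕ // 1 ≤ D},
        ⨆ ρ : {ρ : Matrix (Fin d × Fin D.1) (Fin d × Fin D.1) ℂ // ρ.PosSemidef ∧ ρ.trace = 1},
          (1 / 2 : ℝ) * (traceNorm (partialTraceS (M₁ - N₁) ρ.1) +
            traceNorm (partialTraceS (M₂ - N₂) ρ.1)) := by
      rw [hRdef]
      refine ciSup_le fun k => ?_
      obtain ⟨ρ, h1, h2, h3⟩ := exists_eig_state hΔ k
      have hval1 : (1 / 2 : ℝ) * (traceNorm (partialTraceS (M₁ - N₁) (embed1 ρ)) +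
          traceNorm (partialTraceS (M₂ - N₂) (embed1 ρ))) = |hΔ.eigenvalues k| := by
        rw [partialTraceS_embed1, partialTraceS_embed1, traceNorm_one_by_one,
          traceNorm_one_by_one]
        have hneg : ((M₂ - N₂) * ρ).trace = -(((M₁ - N₁) * ρ).trace) := by
          rw [hM2N2, neg_mul, Matrix.trace_neg]
        rw [hneg, norm_neg, h3, Complex.norm_real, Real.norm_eq_abs]
        ring
      have hbI : BddAbove (Set.range fun σ : {σ : Matrix (Fin d × Fin 1) (Fin d × Fin 1) ℂ //
          σ.PosSemidef ∧ σ.trace = 1} =>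
          (1 / 2 : ℝ) * (traceNorm (partialTraceS (M₁ - N₁) σ.1) +
            traceNorm (partialTraceS (M₂ - N₂) σ.1))) := by
        refine ⟨R, ?_⟩
        rintro x ⟨σ, rfl⟩
        exact hval ⟨1, le_refl 1⟩ σ
      have step1 : |hΔ.eigenvalues k| ≤
          ⨆ σ : {σ : Matrix (Fin d × Fin 1) (Fin d × Fin 1) ℂ // σ.PosSemidef ∧ σ.trace = 1},
            (1 / 2 : ℝ) * (traceNorm (partialTraceS (M₁ - N₁) σ.1) +
              traceNorm (partialTraceS (M₂ - N₂) σ.1)) := by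
        rw [← hval1]
        exact le_ciSup hbI ⟨embed1 ρ, embed1_posSemidef h1, by rw [embed1_trace, h2]⟩
      have hbO : BddAbove (Set.range fun D : {D : ℕ // 1 ≤ D} =>
          ⨆ ρ : {ρ : Matrix (Fin d × Fin D.1) (Fin d × Fin D.1) ℂ // ρ.PosSemidef ∧ ρ.trace = 1},
            (1 / 2 : ℝ) * (traceNorm (partialTraceS (M₁ - N₁) ρ.1) +
              traceNorm (partialTraceS (M₂ - N₂) ρ.1))) := by
        refine ⟨R, ?_⟩
        rintro x ⟨D, rfl⟩
        exact hinner_le D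
      exact step1.trans (le_ciSup hbO ⟨1, le_refl 1⟩)
    have hstabR := le_antisymm hstab_le hstab_ge
    exact ⟨hstabR.trans hUR.symm, hUR⟩
end
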